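/- arXiv:2510.08962 — 2 statements merged into one kernel-verified Lean document; each statement's English description precedes it below -/
import Mathlib

section
/- Let K > 0, let x_1, …, x_m lie on the upper hyperboloid L = {x ∈ ℝ^{n+1} : ⟨x,x⟩_L = −K, x_0 > 0}, and let ω_1, …, ω_m ≥ 0 with Σ_i ω_i > 0. Set s = Σ_{i=1}^m ω_i x_i. Then the function μ ↦ Σ_{i=1}^m ω_i d_L²(x_i, μ) on L has a unique minimizer, given in closed form by the Lorentzian centroid μ_L = √K · s / √(−⟨s,s⟩_L). (Paper's Proposition 3.) -/
/-- The Lorentzian scalar product on `ℝ^{n+1}`: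
`⟨x,y⟩_L = −x₀y₀ + ∑_{i=1}^n xᵢyᵢ`. -/
noncomputable def lorentzInner {n : ℕ} (x y : Fin (n + 1) → ℝ) : ℝ :=
  -(x 0 * y 0) + ∑ i : Fin n, x i.succ * y i.succ

/-- The squared Lorentz distance of two points of the hyperboloid of curvature
parameter `K`: `d_L²(x,y) = −2K − 2⟨x,y⟩_L`. -/
noncomputable def lorentzSqDist {n : ℕ} (K : ℝ) (x y : Fin (n + 1) → ℝ) : ℝ :=
  -(2 * K) - 2 * lorentzInner x y

lemma lin_comm {n : ℕ} (x y : Fin (n + 1) → ℝ) :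
    lorentzInner x y = lorentzInner y x := by
  simp [lorentzInner, mul_comm]

lemma lin_smul_right {n : ℕ} (c : ℝ) (x y : Fin (n + 1) → ℝ) :
    lorentzInner x (c • y) = c * lorentzInner x y := by
  simp only [lorentzInner, Pi.smul_apply, smul_eq_mul, mul_add, Finset.mul_sum]
  congr 1
  · ring
  · exact Finset.sum_congr rfl fun i _ => by ring

lemma lin_sum_right {n m : ℕ} (v : Fin (n + 1) → ℝ) (g : Fin m → (Fin (n + 1) → ℝ)) :
    lorentzInner v (∑ i, g i) = ∑ i, lorentzInner v (g i) := by
  simp only [lorentzInner, Finset.sum_apply, Finset.mul_sum]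
  rw [Finset.sum_add_distrib, Finset.sum_comm, Finset.sum_neg_distrib]

lemma lin_sub_right {n : ℕ} (v a b : Fin (n + 1) → ℝ) :
    lorentzInner v (a - b) = lorentzInner v a - lorentzInner v b := by
  simp only [lorentzInner, Pi.sub_apply, mul_sub]
  rw [Finset.sum_sub_distrib]; ring

lemma lin_wsum_right {n m : ℕ} (v : Fin (n + 1) → ℝ) (c : Fin m → ℝ)
    (g : Fin m → (Fin (n + 1) → ℝ)) :
    lorentzInner v (∑ i, c i • g i) = ∑ i, c i * lorentzInner v (g i) := by
  rw [lin_sum_right]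
  exact Finset.sum_congr rfl fun i _ => lin_smul_right _ _ _

/-- spatial part nonneg -/
lemma spatial_nonneg {n : ℕ} (w : Fin (n + 1) → ℝ) :
    0 ≤ ∑ i : Fin n, w i.succ * w i.succ :=
  Finset.sum_nonneg fun i _ => mul_self_nonneg _

/-- arithmetic core of reverse Cauchy-Schwarz -/
lemma revCS_aux (a b P α β : ℝ) (ha : 0 < a) (hb : 0 < b) (hα : 0 < α) (hβ : 0 < β)
    (hCS : P ^ 2 ≤ (a * a - α) * (b * b - β)) (hPuu : α ≤ a * a) (hPvv : β ≤ b * b) :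
    -(a * b) + P ≤ -Real.sqrt (α * β) := by
  rw [Real.sqrt_mul hα.le]
  obtain ⟨p, hp2, hp0⟩ : ∃ p : ℝ, p ^ 2 = α ∧ 0 ≤ p :=
    ⟨_, Real.sq_sqrt hα.le, Real.sqrt_nonneg _⟩
  obtain ⟨q, hq2, hq0⟩ : ∃ q : ℝ, q ^ 2 = β ∧ 0 ≤ q :=
    ⟨_, Real.sq_sqrt hβ.le, Real.sqrt_nonneg _⟩
  rw [← hp2] at hCS hPuu ⊢
  rw [← hq2] at hCS hPvv ⊢
  rw [Real.sqrt_sq hp0, Real.sqrt_sq hq0]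
  have hpa : p ≤ a := by nlinarith
  have hqb : q ≤ b := by nlinarith
  have hkey : P ^ 2 ≤ (a * b - p * q) ^ 2 := by nlinarith [sq_nonneg (a * q - b * p)]
  have habpq : 0 ≤ a * b - p * q := by nlinarith [mul_le_mul hpa hqb hq0 ha.le]
  have habs : |P| ≤ a * b - p * q := by
    rw [← Real.sqrt_sq_eq_abs, ← Real.sqrt_sq habpq]
    exact Real.sqrt_le_sqrt hkey
  linarith [le_abs_self P]

/-- reverse Cauchy–Schwarz for timelike vectors with positive 0-component -/
lemma revCS {n : ℕ} (u v : Fin (n + 1) → ℝ)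
    (hu : lorentzInner u u < 0) (hu0 : 0 < u 0)
    (hv : lorentzInner v v < 0) (hv0 : 0 < v 0) :
    lorentzInner u v ≤ -Real.sqrt ((-lorentzInner u u) * (-lorentzInner v v)) := by
  have hCS0 : (∑ i : Fin n, u i.succ * v i.succ) ^ 2 ≤
      (∑ i : Fin n, u i.succ * u i.succ) * (∑ i : Fin n, v i.succ * v i.succ) := by
    have := Finset.sum_mul_sq_le_sq_mul_sq Finset.univ (fun i : Fin n => u i.succ)
      (fun i : Fin n => v i.succ)
    simpa [sq] using this
  have huu : lorentzInner u u = -(u 0 * u 0) + ∑ i : Fin n, u i.succ * u i.succ := rfl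
  have hvv : lorentzInner v v = -(v 0 * v 0) + ∑ i : Fin n, v i.succ * v i.succ := rfl
  have huv : lorentzInner u v = -(u 0 * v 0) + ∑ i : Fin n, u i.succ * v i.succ := rfl
  rw [huv]
  refine revCS_aux (u 0) (v 0) _ _ _ hu0 hv0 (by linarith) (by linarith) ?_ ?_ ?_
  · calc (∑ i : Fin n, u i.succ * v i.succ) ^ 2
        ≤ (∑ i : Fin n, u i.succ * u i.succ) * (∑ i : Fin n, v i.succ * v i.succ) := hCS0
      _ = (u 0 * u 0 - -lorentzInner u u) * (v 0 * v 0 - -lorentzInner v v) := by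
          rw [huu, hvv]; ring
  · have := spatial_nonneg u; linarith
  · have := spatial_nonneg v; linarith

/-- orthogonal complement of a timelike vector is spacelike -/
lemma ortho_timelike {n : ℕ} (s w : Fin (n + 1) → ℝ)
    (hs : lorentzInner s s < 0) (hsw : lorentzInner s w = 0)
    (hww : lorentzInner w w = 0) : w = 0 := by
  have hCS : (∑ i : Fin n, s i.succ * w i.succ) ^ 2 ≤
      (∑ i : Fin n, s i.succ * s i.succ) * (∑ i : Fin n, w i.succ * w i.succ) := by
    have := Finset.sum_mul_sq_le_sq_mul_sq Finset.univ (fun i : Fin n => s i.succ)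
      (fun i : Fin n => w i.succ)
    simpa [sq] using this
  have hss' : lorentzInner s s = -(s 0 * s 0) + ∑ i : Fin n, s i.succ * s i.succ := rfl
  have hsw' : lorentzInner s w = -(s 0 * w 0) + ∑ i : Fin n, s i.succ * w i.succ := rfl
  have hww' : lorentzInner w w = -(w 0 * w 0) + ∑ i : Fin n, w i.succ * w i.succ := rfl
  rw [hss'] at hs; rw [hsw'] at hsw; rw [hww'] at hww
  have hPss0 := spatial_nonneg s
  have hPww0 := spatial_nonneg w
  have hP' : (∑ i : Fin n, s i.succ * w i.succ) = s 0 * w 0 := by linarith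
  have h1 : (s 0 * s 0) * (∑ i : Fin n, w i.succ * w i.succ)
      ≤ (∑ i : Fin n, s i.succ * s i.succ) * (∑ i : Fin n, w i.succ * w i.succ) := by
    have h2 : (s 0 * s 0) * (∑ i : Fin n, w i.succ * w i.succ)
        = (∑ i : Fin n, s i.succ * w i.succ) ^ 2 := by rw [hP']; nlinarith [hww]
    rw [h2]; exact hCS
  have hPww_zero : (∑ i : Fin n, w i.succ * w i.succ) = 0 := by
    nlinarith [mul_nonneg hPww0 hPww0]
  have hall : ∀ i : Fin n, w i.succ = 0 := by
    intro i
    have h := (Finset.sum_eq_zero_iff_of_nonneg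
      (fun j _ => mul_self_nonneg (w j.succ))).mp hPww_zero i (Finset.mem_univ i)
    exact mul_self_eq_zero.mp h
  have hw0 : w 0 = 0 := by nlinarith
  funext i
  refine Fin.cases ?_ ?_ i
  · exact hw0
  · intro j; exact hall j

/-- **Lorentzian centroid (Proposition 3).**
Let `K > 0`, let the `x i` lie on the upper hyperboloid
`L = {x : ⟨x,x⟩_L = −K, x₀ > 0}`, and let `ω i ≥ 0` with positive sum.  Then the
function `μ ↦ ∑ i, ω i * d_L²(x i, μ)` on `L` has a unique minimizer, given in
closed form by `μ_L = √K • s / √(−⟨s,s⟩_L)` with `s = ∑ i, ω i • x i`. -/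
theorem stmt2 {n m : ℕ} (K : ℝ) (hK : 0 < K)
    (x : Fin m → (Fin (n + 1) → ℝ))
    (hx : ∀ i, lorentzInner (x i) (x i) = -K ∧ 0 < x i 0)
    (ω : Fin m → ℝ) (hω : ∀ i, 0 ≤ ω i) (hsum : 0 < ∑ i, ω i) :
    let s : Fin (n + 1) → ℝ := ∑ i, ω i • x i
    let μL : Fin (n + 1) → ℝ := (Real.sqrt K / Real.sqrt (-lorentzInner s s)) • s
    (lorentzInner μL μL = -K ∧ 0 < μL 0) ∧
    (∀ μ : Fin (n + 1) → ℝ, lorentzInner μ μ = -K → 0 < μ 0 →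
      ∑ i, ω i * lorentzSqDist K (x i) μL ≤ ∑ i, ω i * lorentzSqDist K (x i) μ) ∧
    (∀ μ : Fin (n + 1) → ℝ, lorentzInner μ μ = -K → 0 < μ 0 →
      (∀ ν : Fin (n + 1) → ℝ, lorentzInner ν ν = -K → 0 < ν 0 →
        ∑ i, ω i * lorentzSqDist K (x i) μ ≤ ∑ i, ω i * lorentzSqDist K (x i) ν) →
      μ = μL) := by
  intro s μL
  have hs_def : s = ∑ i, ω i • x i := rfl
  -- timelike x i
  have hxt : ∀ i, lorentzInner (x i) (x i) < 0 := fun i => by rw [(hx i).1]; linarith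
  -- positive weight exists
  obtain ⟨i0, hi0⟩ : ∃ i, 0 < ω i := by
    by_contra h; push_neg at h
    have : ∑ i, ω i ≤ 0 := Finset.sum_nonpos fun i _ => h i
    linarith
  -- s 0 > 0
  have hs0 : 0 < s 0 := by
    rw [hs_def]
    simp only [Finset.sum_apply, Pi.smul_apply, smul_eq_mul]
    exact Finset.sum_pos' (fun i _ => mul_nonneg (hω i) (hx i).2.le)
      ⟨i0, Finset.mem_univ _, mul_pos hi0 (hx i0).2⟩
  -- pairwise bound
  have hpair : ∀ i j, lorentzInner (x i) (x j) ≤ -K := by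
    intro i j
    have h := revCS (x i) (x j) (hxt i) (hx i).2 (hxt j) (hx j).2
    rw [(hx i).1, (hx j).1, neg_neg, Real.sqrt_mul_self hK.le] at h
    exact h
  -- expansion of ⟨s, v⟩
  have hsv : ∀ v : Fin (n + 1) → ℝ,
      lorentzInner s v = ∑ i, ω i * lorentzInner (x i) v := by
    intro v
    rw [lin_comm, hs_def, lin_wsum_right]
    exact Finset.sum_congr rfl fun i _ => by rw [lin_comm]
  -- ⟨s, s⟩ < 0
  have hss_lt : lorentzInner s s < 0 := by
    have h1 : lorentzInner s s ≤ ∑ i, ω i * (-K * ∑ j, ω j) := by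
      rw [hsv s]
      refine Finset.sum_le_sum fun i _ => ?_
      refine mul_le_mul_of_nonneg_left ?_ (hω i)
      have : lorentzInner (x i) s = ∑ j, ω j * lorentzInner (x i) (x j) := by
        rw [hs_def, lin_wsum_right]
      rw [this]
      calc ∑ j, ω j * lorentzInner (x i) (x j)
          ≤ ∑ j, ω j * (-K) := Finset.sum_le_sum fun j _ =>
            mul_le_mul_of_nonneg_left (hpair i j) (hω j)
        _ = -K * ∑ j, ω j := by rw [← Finset.sum_mul]; ring
    have h2 : ∑ i, ω i * (-K * ∑ j, ω j) = -K * (∑ i, ω i) * (∑ j, ω j) := by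
      rw [← Finset.sum_mul]; ring
    nlinarith [mul_pos (mul_pos hK hsum) hsum]
  set α : ℝ := -lorentzInner s s with hα_def
  have hα : 0 < α := by rw [hα_def]; linarith
  have hsqa : 0 < Real.sqrt α := Real.sqrt_pos.mpr hα
  have hsqk : 0 < Real.sqrt K := Real.sqrt_pos.mpr hK
  set c : ℝ := Real.sqrt K / Real.sqrt α with hc_def
  have hc : 0 < c := div_pos hsqk hsqa
  have hμL_def : μL = c • s := rfl
  -- ⟨μL, μL⟩ = -K
  have hαs : lorentzInner s s = -α := by rw [hα_def]; ring
  have hc2 : c * c = K / α := by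
    rw [hc_def, div_mul_div_comm, Real.mul_self_sqrt hK.le, Real.mul_self_sqrt hα.le]
  have hμLμL : lorentzInner μL μL = -K := by
    rw [hμL_def, lin_smul_right, lin_comm, lin_smul_right, hαs]
    have : c * (c * -α) = (c * c) * (-α) := by ring
    rw [this, hc2]
    field_simp
  have hμL0 : 0 < μL 0 := by
    rw [hμL_def]; exact mul_pos hc hs0
  -- ⟨s, μL⟩ = -(√α * √K)
  have hsμL : lorentzInner s μL = -(Real.sqrt α * Real.sqrt K) := by
    rw [hμL_def, lin_smul_right, hαs, hc_def]
    rw [div_mul_eq_mul_div, div_eq_iff hsqa.ne']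
    linear_combination Real.sqrt K * Real.mul_self_sqrt hα.le
  -- cost function
  have hcost : ∀ μ : Fin (n + 1) → ℝ, ∑ i, ω i * lorentzSqDist K (x i) μ
      = -(2 * K * (∑ i, ω i)) - 2 * lorentzInner s μ := by
    intro μ
    have hterm : ∀ i, ω i * lorentzSqDist K (x i) μ
        = ω i * (-(2 * K)) - 2 * (ω i * lorentzInner (x i) μ) := by
      intro i; simp only [lorentzSqDist]; ring
    rw [Finset.sum_congr rfl fun i _ => hterm i, Finset.sum_sub_distrib,
      ← Finset.sum_mul, ← Finset.mul_sum, ← hsv μ]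
    ring
  -- key inequality
  have hkey : ∀ μ : Fin (n + 1) → ℝ, lorentzInner μ μ = -K → 0 < μ 0 →
      lorentzInner s μ ≤ -(Real.sqrt α * Real.sqrt K) := by
    intro μ hμ hμ0
    have h := revCS s μ hss_lt hs0 (by rw [hμ]; linarith) hμ0
    rw [hμ, neg_neg, ← hα_def, Real.sqrt_mul hα.le] at h
    exact h
  refine ⟨⟨hμLμL, hμL0⟩, ?_, ?_⟩
  · intro μ hμ hμ0
    rw [hcost μ, hcost μL, hsμL]
    have := hkey μ hμ hμ0
    linarith
  · intro μ hμ hμ0 hmin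
    have h1 := hmin μL hμLμL hμL0
    rw [hcost μ, hcost μL, hsμL] at h1
    have h2 := hkey μ hμ hμ0
    have heq : lorentzInner s μ = -(Real.sqrt α * Real.sqrt K) := by linarith
    -- ⟨μ, μL⟩ = -K
    have hμμL : lorentzInner μ μL = -K := by
      rw [hμL_def, lin_smul_right, lin_comm, heq, hc_def]
      rw [div_mul_eq_mul_div, div_eq_iff hsqa.ne']
      linear_combination (-(Real.sqrt α)) * Real.mul_self_sqrt hK.le
    have hsw : lorentzInner s (μ - μL) = 0 := by
      rw [lin_sub_right, heq, hsμL]; ring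
    have hww : lorentzInner (μ - μL) (μ - μL) = 0 := by
      rw [lin_sub_right, lin_comm (μ - μL) μ, lin_sub_right,
        lin_comm (μ - μL) μL, lin_sub_right, hμ, hμLμL, hμμL, lin_comm μL μ, hμμL]
      ring
    have hw := ortho_timelike s (μ - μL) hss_lt hsw hww
    have := sub_eq_zero.mp hw
    exact this
end

section
/- Derivative of the KL divergence under an incremental transport map (the paper's Theorem on Stein and KL): let p : ℝ^n → ℝ be an everywhere positive, continuously differentiable probability density, let q : ℝ^n → ℝ be a probability density with ∫ q(x) |log(q(x)/p(x))| dx < ∞, and let φ : ℝ^n → ℝ^n be continuously differentiable with compact support. For ε ∈ ℝ define T_ε(x) = x + ε φ(x) and F(ε) = ∫_{ℝ^n} q(x) [ log q(x) − log p(T_ε(x)) − log |det(I + ε ∇φ(x))| ] dx, which for all sufficiently small ε equals the KL divergence KL(q_{[T_ε]} ‖ p) of the pushforward density q_{[T_ε]} of q under T_ε from p. Then F is differentiable at ε = 0 and F'(0) = −∫_{ℝ^n} q(x) ( ⟨∇log p(x), φ(x)⟩ + trace(∇φ(x)) ) dx = −E_{x∼q}[ trace(A_p φ(x)) ]. -/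
open MeasureTheory Metric Set

namespace SteinAux

variable {n : ℕ}

def mydet (m : Fin n → Fin n → ℝ) : ℝ := Matrix.det (Matrix.of m)

def one' : Fin n → Fin n → ℝ := fun i j => if i = j then 1 else 0

noncomputable def eM (φ : (Fin n → ℝ) → (Fin n → ℝ)) (x : Fin n → ℝ) : Fin n → Fin n → ℝ :=
  fun i j => fderiv ℝ φ x (Pi.single j 1) i

lemma of_one' : (Matrix.of (one' : Fin n → Fin n → ℝ)) = (1 : Matrix (Fin n) (Fin n) ℝ) := by
  ext i j; simp [one', Matrix.one_apply]

lemma mydet_one' : mydet (one' : Fin n → Fin n → ℝ) = 1 := by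
  rw [mydet, of_one', Matrix.det_one]

lemma contDiff_mydet : ContDiff ℝ 1 (mydet (n := n)) := by
  have h : (mydet (n := n)) = fun m => ∑ σ : Equiv.Perm (Fin n),
      (((Equiv.Perm.sign σ : ℤˣ) : ℤ) : ℝ) * ∏ i, m (σ i) i := by
    funext m
    rw [mydet, Matrix.det_apply]
    simp [Units.smul_def, zsmul_eq_mul]
  rw [h]
  refine ContDiff.sum fun σ _ => contDiff_const.mul (contDiff_prod fun i _ => ?_)
  exact ((ContinuousLinearMap.proj i :
      (Fin n → ℝ) →L[ℝ] ℝ).comp (ContinuousLinearMap.proj (σ i) :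
      (Fin n → Fin n → ℝ) →L[ℝ] (Fin n → ℝ))).contDiff

lemma hasDerivAt_det_one_add_smul (B : Matrix (Fin n) (Fin n) ℝ) :
    HasDerivAt (fun t : ℝ => Matrix.det (1 + t • B)) (Matrix.trace B) 0 := by
  set P : Polynomial ℝ :=
    (Matrix.det (1 + (Polynomial.X : Polynomial ℝ) • B.map Polynomial.C)).divX.divX with hP
  have h : ∀ t : ℝ, Matrix.det (1 + t • B)
      = 1 + Matrix.trace B * t + P.eval t * t ^ 2 := fun t => Matrix.det_one_add_smul t B
  have ha : HasDerivAt (fun t : ℝ => Matrix.trace B * t) (Matrix.trace B) 0 := by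
    simpa using (hasDerivAt_id (0 : ℝ)).const_mul (Matrix.trace B)
  have hb : HasDerivAt (fun t : ℝ => P.eval t * t ^ 2) 0 0 := by
    have := (Polynomial.hasDerivAt P 0).mul (hasDerivAt_pow 2 (0 : ℝ))
    exact this.congr_deriv (by simp)
  have h2 : HasDerivAt (fun t : ℝ => 1 + Matrix.trace B * t + P.eval t * t ^ 2)
      (Matrix.trace B) 0 := by
    exact ((ha.const_add 1).add hb).congr_deriv (by simp)
  exact h2.congr_of_eventuallyEq (Filter.Eventually.of_forall h)

lemma line_eq (B : Fin n → Fin n → ℝ) :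
    (fun t : ℝ => mydet (one' + t • B)) = fun t : ℝ => Matrix.det (1 + t • Matrix.of B) := by
  funext t
  rw [mydet]
  congr 1

lemma hasDerivAt_mydet_line (B : Fin n → Fin n → ℝ) :
    HasDerivAt (fun t : ℝ => mydet (one' + t • B)) (Matrix.trace (Matrix.of B)) 0 := by
  rw [line_eq]
  exact hasDerivAt_det_one_add_smul (Matrix.of B)

lemma fderiv_mydet_one (B : Fin n → Fin n → ℝ) :
    fderiv ℝ (mydet (n := n)) one' B = Matrix.trace (Matrix.of B) := by
  have hline : HasDerivAt (fun t : ℝ => one' + t • B) B 0 := by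
    simpa using ((hasDerivAt_id (0 : ℝ)).smul_const B).const_add (one' (n := n))
  have h0 : one' + (0 : ℝ) • B = one' := by simp
  have h1 : HasDerivAt (fun t : ℝ => mydet (one' + t • B))
      (fderiv ℝ (mydet (n := n)) (one' + (0 : ℝ) • B) B) 0 :=
    ((contDiff_mydet.differentiable one_ne_zero) _).hasFDerivAt.comp_hasDerivAt 0 hline
  rw [h0] at h1
  exact h1.unique (hasDerivAt_mydet_line B)

end SteinAux

open SteinAux

/-- **Derivative of the KL divergence under an incremental transport map
(the Stein–KL theorem).**
Let `p` be an everywhere positive C¹ probability density on `ℝⁿ`, `q` a probability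
density with `∫ q |log(q/p)| < ∞`, and `φ : ℝⁿ → ℝⁿ` C¹ with compact support.
With `T_ε(x) = x + ε φ(x)` and
`F(ε) = ∫ q(x) [log q(x) − log p(T_ε(x)) − log |det(I + ε ∇φ(x))|] dx`
(which for small `ε` equals `KL(q_{[T_ε]} ‖ p)`), `F` is differentiable at `0` with
`F'(0) = −∫ q(x) (⟨∇log p(x), φ(x)⟩ + tr ∇φ(x)) dx = −E_{x∼q}[tr(A_p φ(x))]`. -/
theorem stmt9 {n : ℕ} (p q : (Fin n → ℝ) → ℝ) (φ : (Fin n → ℝ) → (Fin n → ℝ))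
    (hp : ContDiff ℝ 1 p) (hppos : ∀ x, 0 < p x) (hp1 : ∫ x, p x = 1)
    (hq0 : ∀ x, 0 ≤ q x) (hq1 : ∫ x, q x = 1)
    (hqp : Integrable (fun x => q x * |Real.log (q x / p x)|))
    (hφ : ContDiff ℝ 1 φ) (hφc : HasCompactSupport φ) :
    HasDerivAt
      (fun ε : ℝ => ∫ x, q x *
        (Real.log (q x) - Real.log (p (x + ε • φ x)) -
          Real.log |LinearMap.det
            ((LinearMap.id : (Fin n → ℝ) →ₗ[ℝ] (Fin n → ℝ)) +
              ε • (fderiv ℝ φ x).toLinearMap)|))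
      (-∫ x, q x *
        (fderiv ℝ (fun y => Real.log (p y)) x (φ x) +
          LinearMap.trace ℝ (Fin n → ℝ) (fderiv ℝ φ x).toLinearMap))
      0 := by
  classical
  have hpc : Continuous p := hp.continuous
  have hφcont : Continuous φ := hφ.continuous
  have hA : Continuous (fderiv ℝ φ) := hφ.continuous_fderiv one_ne_zero
  have heM : Continuous (eM φ) := by
    refine continuous_pi fun i => continuous_pi fun j => ?_
    exact (continuous_apply i).comp (hA.clm_apply continuous_const)
  have hqInt : Integrable q := by
    by_contra h
    rw [integral_undef h] at hq1; norm_num at hq1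
  -- rewrite determinant and trace in the goal
  have hDet : ∀ (ε : ℝ) (x : Fin n → ℝ),
      LinearMap.det ((LinearMap.id : (Fin n → ℝ) →ₗ[ℝ] (Fin n → ℝ)) +
        ε • (fderiv ℝ φ x).toLinearMap) = mydet (one' + ε • eM φ x) := by
    intro ε x
    rw [← LinearMap.det_toMatrix', mydet]
    congr 1
    ext i j
    rw [LinearMap.toMatrix'_apply]
    have hs : (fun j' => if j' = j then (1:ℝ) else 0) = Pi.single j (1:ℝ) := by
      funext j'; rw [Pi.single_apply]
    simp only [LinearMap.add_apply, LinearMap.smul_apply, LinearMap.id_apply,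
      ContinuousLinearMap.coe_coe, Pi.add_apply, Pi.smul_apply, Matrix.of_apply,
      smul_eq_mul]
    congr 1
    simp [Pi.single_apply, one']
  have hTr : ∀ x : Fin n → ℝ,
      LinearMap.trace ℝ (Fin n → ℝ) (fderiv ℝ φ x).toLinearMap
        = Matrix.trace (Matrix.of (eM φ x)) := by
    intro x
    rw [LinearMap.trace_eq_matrix_trace ℝ (Pi.basisFun ℝ (Fin n)),
      LinearMap.toMatrix_eq_toMatrix']
    have h : LinearMap.toMatrix' ((fderiv ℝ φ x).toLinearMap) = Matrix.of (eM φ x) := by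
      ext i j
      rw [LinearMap.toMatrix'_apply]
      have hs : (fun j' => if j' = j then (1:ℝ) else 0) = Pi.single j (1:ℝ) := by
        funext j'; rw [Pi.single_apply]
      rfl
    rw [h]
  simp only [hDet, hTr, Real.log_abs]
  -- log p derivative facts
  have hlpd : ∀ y, HasFDerivAt (fun y => Real.log (p y)) ((p y)⁻¹ • fderiv ℝ p y) y := fun y =>
    (Real.hasDerivAt_log (hppos y).ne').comp_hasFDerivAt y (hp.differentiable one_ne_zero y).hasFDerivAt
  have hfd : ∀ y, fderiv ℝ (fun y => Real.log (p y)) y = (p y)⁻¹ • fderiv ℝ p y :=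
    fun y => (hlpd y).fderiv
  have hLcont : Continuous fun y : Fin n → ℝ => (p y)⁻¹ • fderiv ℝ p y :=
    (hpc.inv₀ fun y => (hppos y).ne').smul (hp.continuous_fderiv one_ne_zero)
  -- compact support facts
  have hK : IsCompact (tsupport φ) := hφc
  have hφ0 : ∀ x ∉ tsupport φ, φ x = 0 := fun x hx => image_eq_zero_of_notMem_tsupport hx
  have hfd0 : ∀ x ∉ tsupport φ, fderiv ℝ φ x = 0 := by
    intro x hx
    by_contra h
    exact hx (support_fderiv_subset ℝ (Function.mem_support.2 h))
  have heM0 : ∀ x ∉ tsupport φ, eM φ x = 0 := by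
    intro x hx
    funext i j
    simp [eM, hfd0 x hx]
  -- tube lemma: δ such that the determinant stays above 1/2
  have hDcont : Continuous fun z : ℝ × (Fin n → ℝ) => mydet (one' + z.1 • eM φ z.2) :=
    contDiff_mydet.continuous.comp
      (continuous_const.add (continuous_fst.smul (heM.comp continuous_snd)))
  obtain ⟨δ, hδpos, hδle, hDlow⟩ :
      ∃ δ : ℝ, 0 < δ ∧ δ ≤ 1 ∧ ∀ ε ∈ ball (0:ℝ) δ, ∀ x,
        (1:ℝ)/2 < mydet (one' + ε • eM φ x) := by
    have hone : ∀ x : Fin n → ℝ, mydet (one' + (0:ℝ) • eM φ x) = 1 := by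
      intro x; simp [mydet_one']
    have hU : IsOpen {z : ℝ × (Fin n → ℝ) | (1:ℝ)/2 < mydet (one' + z.1 • eM φ z.2)} :=
      isOpen_lt continuous_const hDcont
    have hsub : ({(0:ℝ)} ×ˢ tsupport φ) ⊆
        {z : ℝ × (Fin n → ℝ) | (1:ℝ)/2 < mydet (one' + z.1 • eM φ z.2)} := by
      rintro ⟨a, x⟩ ⟨ha, hx⟩
      simp only [mem_singleton_iff] at ha
      subst ha
      have := hone x
      simp only [mem_setOf_eq]
      rw [this]
      norm_num
    obtain ⟨v, w, hv, -, h0v, hKw, hvw⟩ :=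
      generalized_tube_lemma isCompact_singleton hK hU hsub
    obtain ⟨δ₁, hδ₁pos, hball⟩ := Metric.isOpen_iff.1 hv 0 (h0v rfl)
    refine ⟨min δ₁ 1, by positivity, min_le_right _ _, ?_⟩
    intro ε hε x
    by_cases hx : x ∈ tsupport φ
    · have hεv : ε ∈ ball (0:ℝ) δ₁ :=
        mem_ball.2 (lt_of_lt_of_le (mem_ball.1 hε) (min_le_left _ _))
      exact hvw (mk_mem_prod (hball hεv) (hKw hx))
    · rw [heM0 x hx]
      have : one' + ε • (0 : Fin n → Fin n → ℝ) = one' := by simp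
      rw [this, mydet_one']
      norm_num
  -- bounds
  obtain ⟨Cφ, hCφ⟩ := hφcont.bounded_above_of_compact_support hφc
  have hCφ0 : 0 ≤ Cφ := le_trans (norm_nonneg _) (hCφ 0)
  have heMcs : HasCompactSupport (eM φ) := by
    refine HasCompactSupport.mono' hφc ?_
    intro x hx
    by_contra hxx
    exact hx (heM0 x hxx)
  obtain ⟨Ce, hCe⟩ := heM.bounded_above_of_compact_support heMcs
  have hCe0 : 0 ≤ Ce := le_trans (norm_nonneg _) (hCe 0)
  have hIm1 : IsCompact ((fun z : ℝ × (Fin n → ℝ) => z.2 + z.1 • φ z.2) ''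
      (Icc (-1:ℝ) 1 ×ˢ tsupport φ)) :=
    (isCompact_Icc.prod hK).image (continuous_snd.add (continuous_fst.smul
      (hφcont.comp continuous_snd)))
  obtain ⟨C1, hC1⟩ := hIm1.exists_bound_of_continuousOn hLcont.continuousOn
  have hIm2 : IsCompact (((fun z : ℝ × (Fin n → ℝ) => one' + z.1 • eM φ z.2) ''
      (Icc (-1:ℝ) 1 ×ˢ tsupport φ)) ∪ {one'}) :=
    (((isCompact_Icc.prod hK).image (continuous_const.add (continuous_fst.smul
      (heM.comp continuous_snd)))).union isCompact_singleton)
  obtain ⟨C2, hC2⟩ := hIm2.exists_bound_of_continuousOn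
    (contDiff_mydet.continuous_fderiv one_ne_zero).continuousOn
  set C1' := max C1 0 with hC1'def
  set C2' := max C2 0 with hC2'def
  have hC1'0 : 0 ≤ C1' := le_max_right _ _
  have hC2'0 : 0 ≤ C2' := le_max_right _ _
  set C := C1' * Cφ + 2 * (C2' * Ce) with hCdef
  have hC0 : 0 ≤ C := by positivity
  -- the dominated-derivative theorem
  have main :
      HasDerivAt
        (fun ε : ℝ => ∫ x, q x *
          (Real.log (q x) - Real.log (p (x + ε • φ x)) -
            Real.log (mydet (one' + ε • eM φ x))))
        (∫ x, -(q x * (((p (x + (0:ℝ) • φ x))⁻¹ • fderiv ℝ p (x + (0:ℝ) • φ x)) (φ x)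
            + fderiv ℝ mydet (one' + (0:ℝ) • eM φ x) (eM φ x)
              / mydet (one' + (0:ℝ) • eM φ x)))) 0 := by
    refine (hasDerivAt_integral_of_dominated_loc_of_deriv_le (μ := volume) (x₀ := (0:ℝ))
      (F := fun ε x => q x *
        (Real.log (q x) - Real.log (p (x + ε • φ x)) -
          Real.log (mydet (one' + ε • eM φ x))))
      (F' := fun ε x => -(q x * (((p (x + ε • φ x))⁻¹ • fderiv ℝ p (x + ε • φ x)) (φ x)
          + fderiv ℝ mydet (one' + ε • eM φ x) (eM φ x) / mydet (one' + ε • eM φ x))))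
      (bound := fun x => C * q x)
      (Metric.ball_mem_nhds 0 hδpos) ?_ ?_ ?_ ?_ ?_ ?_).2
    · -- measurability of F ε
      refine Filter.Eventually.of_forall fun ε => AEMeasurable.aestronglyMeasurable ?_
      refine hqInt.aemeasurable.mul (AEMeasurable.sub (AEMeasurable.sub ?_ ?_) ?_)
      · exact Real.measurable_log.comp_aemeasurable hqInt.aemeasurable
      · exact (Real.measurable_log.comp ((hpc.comp (continuous_id.add
          ((continuous_const : Continuous fun _ : Fin n → ℝ => ε).smul hφcont))).measurable)).aemeasurable
      · exact (Real.measurable_log.comp ((contDiff_mydet.continuous.comp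
          (continuous_const.add ((continuous_const : Continuous fun _ : Fin n → ℝ => ε).smul heM))).measurable)).aemeasurable
    · -- integrability of F 0
      have hmg : AEStronglyMeasurable (fun x => q x * Real.log (q x / p x)) volume :=
        (hqInt.aemeasurable.mul (Real.measurable_log.comp_aemeasurable
          (hqInt.aemeasurable.div hpc.measurable.aemeasurable))).aestronglyMeasurable
      have hg : Integrable (fun x => q x * Real.log (q x / p x)) := by
        refine (integrable_norm_iff hmg).1 ?_
        have hh : (fun x => ‖q x * Real.log (q x / p x)‖)
            = fun x => q x * |Real.log (q x / p x)| := by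
          funext x
          rw [Real.norm_eq_abs, abs_mul, abs_of_nonneg (hq0 x)]
        rw [hh]; exact hqp
      refine hg.congr (Filter.Eventually.of_forall fun x => ?_)
      show q x * Real.log (q x / p x) = q x * (Real.log (q x)
        - Real.log (p (x + (0:ℝ) • φ x)) - Real.log (mydet (one' + (0:ℝ) • eM φ x)))
      rcases eq_or_lt_of_le (hq0 x) with h0 | h0
      · simp [← h0]
      · rw [Real.log_div h0.ne' (hppos x).ne']
        simp [mydet_one']
    · -- measurability of F' 0
      refine (AEMeasurable.neg ?_).aestronglyMeasurable
      refine hqInt.aemeasurable.mul (AEMeasurable.add ?_ ?_)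
      · exact ((hLcont.comp (continuous_id.add ((continuous_const : Continuous fun _ : Fin n → ℝ => (0:ℝ)).smul
          hφcont))).clm_apply hφcont).measurable.aemeasurable
      · exact ((((contDiff_mydet.continuous_fderiv one_ne_zero).comp (continuous_const.add
          ((continuous_const : Continuous fun _ : Fin n → ℝ => (0:ℝ)).smul heM))).clm_apply heM).measurable.aemeasurable).div
          ((contDiff_mydet.continuous.comp (continuous_const.add
          ((continuous_const : Continuous fun _ : Fin n → ℝ => (0:ℝ)).smul heM))).measurable.aemeasurable)
    · -- bound
      refine Filter.Eventually.of_forall fun x ε hε => ?_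
      by_cases hx : x ∈ tsupport φ
      · have h1 := mem_ball.1 hε
        rw [Real.dist_eq, sub_zero] at h1
        have hεI : ε ∈ Icc (-1:ℝ) 1 := mem_Icc.2 (abs_le.1 (le_of_lt
          (lt_of_lt_of_le h1 hδle)))
        have hy : x + ε • φ x ∈ (fun z : ℝ × (Fin n → ℝ) => z.2 + z.1 • φ z.2) ''
            (Icc (-1:ℝ) 1 ×ˢ tsupport φ) := ⟨(ε, x), mk_mem_prod hεI hx, rfl⟩
        have ht1 : |((p (x + ε • φ x))⁻¹ • fderiv ℝ p (x + ε • φ x)) (φ x)| ≤ C1' * Cφ := by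
          have hop := ContinuousLinearMap.le_opNorm
            ((p (x + ε • φ x))⁻¹ • fderiv ℝ p (x + ε • φ x)) (φ x)
          have hL : ‖(p (x + ε • φ x))⁻¹ • fderiv ℝ p (x + ε • φ x)‖ ≤ C1' :=
            le_trans (hC1 _ hy) (le_max_left _ _)
          calc |((p (x + ε • φ x))⁻¹ • fderiv ℝ p (x + ε • φ x)) (φ x)|
              = ‖((p (x + ε • φ x))⁻¹ • fderiv ℝ p (x + ε • φ x)) (φ x)‖ :=
                (Real.norm_eq_abs _).symm
            _ ≤ ‖(p (x + ε • φ x))⁻¹ • fderiv ℝ p (x + ε • φ x)‖ * ‖φ x‖ := hop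
            _ ≤ C1' * Cφ := mul_le_mul hL (hCφ x) (norm_nonneg _) hC1'0
        have hm2 : one' + ε • eM φ x ∈ ((fun z : ℝ × (Fin n → ℝ) =>
            one' + z.1 • eM φ z.2) '' (Icc (-1:ℝ) 1 ×ˢ tsupport φ)) ∪ {one'} :=
          Or.inl ⟨(ε, x), mk_mem_prod hεI hx, rfl⟩
        have hden := hDlow ε hε x
        have hnum : |fderiv ℝ mydet (one' + ε • eM φ x) (eM φ x)| ≤ C2' * Ce := by
          have hop := ContinuousLinearMap.le_opNorm
            (fderiv ℝ mydet (one' + ε • eM φ x)) (eM φ x)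
          have hL : ‖fderiv ℝ mydet (one' + ε • eM φ x)‖ ≤ C2' :=
            le_trans (hC2 _ hm2) (le_max_left _ _)
          calc |fderiv ℝ mydet (one' + ε • eM φ x) (eM φ x)|
              = ‖fderiv ℝ mydet (one' + ε • eM φ x) (eM φ x)‖ := (Real.norm_eq_abs _).symm
            _ ≤ ‖fderiv ℝ mydet (one' + ε • eM φ x)‖ * ‖eM φ x‖ := hop
            _ ≤ C2' * Ce := mul_le_mul hL (hCe x) (norm_nonneg _) hC2'0
        have ht2 : |fderiv ℝ mydet (one' + ε • eM φ x) (eM φ x)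
            / mydet (one' + ε • eM φ x)| ≤ 2 * (C2' * Ce) := by
          rw [abs_div]
          have hdpos : (0:ℝ) < |mydet (one' + ε • eM φ x)| :=
            abs_pos.2 (ne_of_gt (lt_trans (by norm_num) hden))
          rw [div_le_iff₀ hdpos]
          have habs : (1:ℝ)/2 ≤ |mydet (one' + ε • eM φ x)| :=
            le_trans (le_of_lt hden) (le_abs_self _)
          nlinarith [abs_nonneg (fderiv ℝ mydet (one' + ε • eM φ x) (eM φ x)),
            mul_nonneg hC2'0 hCe0]
        calc ‖-(q x * (((p (x + ε • φ x))⁻¹ • fderiv ℝ p (x + ε • φ x)) (φ x)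
              + fderiv ℝ mydet (one' + ε • eM φ x) (eM φ x) / mydet (one' + ε • eM φ x)))‖
            = q x * |((p (x + ε • φ x))⁻¹ • fderiv ℝ p (x + ε • φ x)) (φ x)
              + fderiv ℝ mydet (one' + ε • eM φ x) (eM φ x) / mydet (one' + ε • eM φ x)| := by
              rw [norm_neg, Real.norm_eq_abs, abs_mul, abs_of_nonneg (hq0 x)]
          _ ≤ q x * (C1' * Cφ + 2 * (C2' * Ce)) :=
              mul_le_mul_of_nonneg_left ((abs_add_le _ _).trans (add_le_add ht1 ht2)) (hq0 x)
          _ = C * q x := by rw [hCdef, mul_comm]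
      · have h1 : φ x = 0 := hφ0 x hx
        have h2 : eM φ x = 0 := heM0 x hx
        have hz : ‖-(q x * (((p (x + ε • φ x))⁻¹ • fderiv ℝ p (x + ε • φ x)) (φ x)
            + fderiv ℝ mydet (one' + ε • eM φ x) (eM φ x)
              / mydet (one' + ε • eM φ x)))‖ = 0 := by
          rw [h1, h2]
          simp
        rw [hz]
        exact mul_nonneg hC0 (hq0 x)
    · exact hqInt.const_mul C
    · -- differentiability
      refine Filter.Eventually.of_forall fun x ε hε => ?_
      have hlineφ : HasDerivAt (fun t : ℝ => x + t • φ x) (φ x) ε := by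
        simpa using ((hasDerivAt_id ε).smul_const (φ x)).const_add x
      have h1 : HasDerivAt (fun t : ℝ => Real.log (p (x + t • φ x)))
          (((p (x + ε • φ x))⁻¹ • fderiv ℝ p (x + ε • φ x)) (φ x)) ε :=
        (hlpd (x + ε • φ x)).comp_hasDerivAt (f := fun t : ℝ => x + t • φ x) ε hlineφ
      have hlineM : HasDerivAt (fun t : ℝ => one' + t • eM φ x) (eM φ x) ε := by
        simpa using ((hasDerivAt_id ε).smul_const (eM φ x)).const_add (one' (n := n))
      have hden := hDlow ε hε x
      have hdnz : mydet (one' + ε • eM φ x) ≠ 0 :=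
        ne_of_gt (lt_trans (by norm_num) hden)
      have h2 : HasDerivAt (fun t : ℝ => Real.log (mydet (one' + t • eM φ x)))
          (fderiv ℝ mydet (one' + ε • eM φ x) (eM φ x) / mydet (one' + ε • eM φ x)) ε := by
        have hd : HasDerivAt (fun t : ℝ => mydet (one' + t • eM φ x))
            (fderiv ℝ mydet (one' + ε • eM φ x) (eM φ x)) ε :=
          ((contDiff_mydet.differentiable one_ne_zero) _).hasFDerivAt.comp_hasDerivAt ε hlineM
        exact hd.log hdnz
      have h3 := (((hasDerivAt_const ε (Real.log (q x))).sub h1).sub h2).const_mul (q x)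
      have heq : q x * (0 - ((p (x + ε • φ x))⁻¹ • fderiv ℝ p (x + ε • φ x)) (φ x)
          - fderiv ℝ mydet (one' + ε • eM φ x) (eM φ x) / mydet (one' + ε • eM φ x))
          = -(q x * ((((p (x + ε • φ x))⁻¹ • fderiv ℝ p (x + ε • φ x)) (φ x))
            + fderiv ℝ mydet (one' + ε • eM φ x) (eM φ x)
              / mydet (one' + ε • eM φ x))) := by ring
      show HasDerivAt (fun t : ℝ => q x * (Real.log (q x) - Real.log (p (x + t • φ x))
          - Real.log (mydet (one' + t • eM φ x))))
        (-(q x * (((p (x + ε • φ x))⁻¹ • fderiv ℝ p (x + ε • φ x)) (φ x)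
          + fderiv ℝ mydet (one' + ε • eM φ x) (eM φ x) / mydet (one' + ε • eM φ x)))) ε
      rw [← heq]
      exact h3
  have hval :
      (∫ x, -(q x * (((p (x + (0:ℝ) • φ x))⁻¹ • fderiv ℝ p (x + (0:ℝ) • φ x)) (φ x)
          + fderiv ℝ mydet (one' + (0:ℝ) • eM φ x) (eM φ x)
            / mydet (one' + (0:ℝ) • eM φ x))))
        = -∫ x, q x * (fderiv ℝ (fun y => Real.log (p y)) x (φ x)
            + Matrix.trace (Matrix.of (eM φ x))) := by
    rw [← integral_neg]
    congr 1; funext x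
    simp only [zero_smul, add_zero, fderiv_mydet_one, mydet_one', div_one, hfd]
  rw [← hval]
  exact main
end
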